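/- Let a, b ≥ 1 and let D be an acyclic oriented graph such that the undirected line graph L(D) contains no subgraph isomorphic to the complete bipartite graph K_{a,b}. Then the underlying undirected graph G of D satisfies χ(G) ≤ a + b; indeed, the vertex set of G can be partitioned into a set inducing a subgraph of degeneracy at most b−1 and a set inducing a subgraph of degeneracy at most a−1. -/

import Mathlib

open SimpleGraph

/-- The shift graph `G_{n,2}`: vertices are pairs `(i,j)` with `i < j` in `Fin n`,
and `(i,j)` is adjacent to `(k,l)` iff `j = k` or `l = i`. -/
def ShiftGraph (n : ℕ) : SimpleGraph {p : Fin n × Fin n // p.1 < p.2} :=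
  SimpleGraph.fromRel (fun p q => p.1.2 = q.1.1)

/-- The arcs of a digraph `D`. -/
def Arcs {V : Type} (D : V → V → Prop) : Type := {e : V × V // D e.1 e.2}

/-- The line digraph `L⃗(D)`: there is an arc from `(a,b)` to `(c,d)` iff `b = c`. -/
def LineDigraph {V : Type} (D : V → V → Prop) : Arcs D → Arcs D → Prop :=
  fun e f => e.1.2 = f.1.1

/-- The underlying undirected (simple) graph of a digraph. -/
def UG {V : Type} (D : V → V → Prop) : SimpleGraph V := SimpleGraph.fromRel D

/-- The undirected line graph `L(D)`: the underlying undirected graph of the line digraph,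
in which two arcs are adjacent iff the head of one equals the tail of the other. -/
def LineGraph {V : Type} (D : V → V → Prop) : SimpleGraph (Arcs D) :=
  UG (LineDigraph D)

/-- A digraph is an oriented graph if its arc relation is irreflexive and between any
two vertices at most one of the two opposite arcs is present. -/
def Oriented {V : Type} (D : V → V → Prop) : Prop :=
  Irreflexive D ∧ ∀ a b, D a b → ¬ D b a

/-- A digraph is acyclic if it contains no directed cycle, equivalently no vertex is
reachable from itself by a nonempty directed walk. -/
def DigraphAcyclic {V : Type} (D : V → V → Prop) : Prop :=
  ∀ v, ¬ Relation.TransGen D v v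

/-- The iterated line digraph: `(IterLine V D g).1` is the vertex type of `L⃗^g(D)` and
`(IterLine V D g).2` is its arc relation. -/
def IterLine (V : Type) (D : V → V → Prop) : ℕ → (W : Type) × (W → W → Prop)
  | 0 => ⟨V, D⟩
  | g + 1 => ⟨Arcs (IterLine V D g).2, LineDigraph (IterLine V D g).2⟩

/-- `l` is (the list of vertices of) a directed path from `x` to `y` in the digraph `D`:
consecutive vertices are joined by arcs, the vertices are pairwise distinct, and the
list starts at `x` and ends at `y`. -/
def IsDipath {V : Type} (D : V → V → Prop) (x y : V) (l : List V) : Prop :=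
  l.Chain' D ∧ l.head? = some x ∧ l.getLast? = some y ∧ l.Nodup

/-- A digraph has at most one directed path from any vertex to any other vertex. -/
def UniqueDipaths {V : Type} (D : V → V → Prop) : Prop :=
  ∀ x y l₁ l₂, IsDipath D x y l₁ → IsDipath D x y l₂ → l₁ = l₂

/-- `D` is an orientation of the simple graph `G`. -/
def IsOrientationOf {V : Type} (G : SimpleGraph V) (D : V → V → Prop) : Prop :=
  (∀ a b, D a b → G.Adj a b) ∧ (∀ a b, G.Adj a b → (D a b ∨ D b a)) ∧
    (∀ a b, D a b → ¬ D b a)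

/-- A simple graph has the AOP property if it admits an acyclic orientation with at most
one directed path between any ordered pair of vertices. -/
def HasAOP {V : Type} (G : SimpleGraph V) : Prop :=
  ∃ D : V → V → Prop, IsOrientationOf G D ∧ DigraphAcyclic D ∧ UniqueDipaths D

/-- The tower function: `Tower g x` is `2^(2^(⋯^x))` with `g` twos. -/
def Tower : ℕ → ℕ → ℕ
  | 0, x => x
  | i + 1, x => 2 ^ Tower i x

/-- The graph `G` has degeneracy at most `k`: every nonempty (induced subgraph on a) set
of vertices contains a vertex with at most `k` neighbours inside the set. -/
def DegenLE {V : Type} (G : SimpleGraph V) (k : ℕ) : Prop :=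
  ∀ s : Set V, s.Nonempty → ∃ v ∈ s, ({u ∈ s | G.Adj v u} : Set V).ncard ≤ k


section Aux

open Relation

lemma colorable_of_degenLE_aux (k : ℕ) :
    ∀ n (V : Type) (_ : Fintype V) (G : SimpleGraph V), Fintype.card V ≤ n →
      DegenLE G k → G.Colorable (k + 1) := by
  intro n
  induction n with
  | zero =>
    intro V _ G hcard _
    have : IsEmpty V := Fintype.card_eq_zero_iff.mp (Nat.le_zero.mp hcard)
    exact ⟨⟨fun v => isEmptyElim v, fun {v w} h => isEmptyElim v⟩⟩
  | succ n ih =>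
    intro V inst G hcard hdeg
    classical
    by_cases hV : IsEmpty V
    · exact ⟨⟨fun v => isEmptyElim v, fun {v w} h => isEmptyElim v⟩⟩
    rw [not_isEmpty_iff] at hV
    obtain ⟨v, -, hv⟩ := hdeg Set.univ Set.univ_nonempty
    have hv' : ({u | G.Adj v u} : Set V).ncard ≤ k := by simpa using hv
    set V' := {u : V // u ≠ v} with hV'
    have hcard' : Fintype.card V' ≤ n := by
      have h := Fintype.card_subtype_lt (p := fun u => u ≠ v) (x := v) (by simp)
      have h2 : Fintype.card {y // (fun u => u ≠ v) y} = Fintype.card V' :=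
        Fintype.card_congr (Equiv.refl V')
      exact Nat.le_of_lt_succ (lt_of_eq_of_lt (Fintype.card_congr (Equiv.refl V')) (lt_of_lt_of_le h hcard))
    have hdeg' : DegenLE (G.comap (Subtype.val : V' → V)) k := by
      intro s hs
      obtain ⟨w, hws, hwcard⟩ := hdeg (Subtype.val '' s) (hs.image _)
      obtain ⟨w', hw's, rfl⟩ := hws
      refine ⟨w', hw's, ?_⟩
      calc ({u ∈ s | (G.comap (Subtype.val : V' → V)).Adj w' u}).ncard
          = (Subtype.val '' {u ∈ s | (G.comap (Subtype.val : V' → V)).Adj w' u}).ncard :=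
            (Set.ncard_image_of_injective _ Subtype.val_injective).symm
        _ ≤ ({u ∈ Subtype.val '' s | G.Adj (↑w') u}).ncard := by
            refine Set.ncard_le_ncard ?_ (Set.toFinite _)
            rintro x ⟨u, ⟨hus, hadj⟩, rfl⟩
            exact ⟨⟨u, hus, rfl⟩, hadj⟩
        _ ≤ k := hwcard
    obtain ⟨C'⟩ := ih V' (Subtype.fintype _) (G.comap (Subtype.val : V' → V)) hcard' hdeg'
    have hne : ∃ c : Fin (k + 1), c ∉ C' '' {u : V' | G.Adj v ↑u} := by
      by_contra hc
      push_neg at hc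
      have huniv : C' '' {u : V' | G.Adj v ↑u} = Set.univ := Set.eq_univ_of_forall hc
      have h1 : (C' '' {u : V' | G.Adj v ↑u}).ncard ≤ k := by
        calc (C' '' {u : V' | G.Adj v ↑u}).ncard
            ≤ ({u : V' | G.Adj v ↑u}).ncard := Set.ncard_image_le (Set.toFinite _)
          _ = (Subtype.val '' {u : V' | G.Adj v ↑u}).ncard :=
              (Set.ncard_image_of_injective _ Subtype.val_injective).symm
          _ ≤ ({u | G.Adj v u} : Set V).ncard := by
              refine Set.ncard_le_ncard ?_ (Set.toFinite _)
              rintro x ⟨u, hu, rfl⟩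
              exact hu
          _ ≤ k := hv'
      rw [huniv, Set.ncard_univ] at h1
      simp [Nat.card_eq_fintype_card] at h1
    obtain ⟨c, hc⟩ := hne
    refine ⟨⟨fun u => if h : u = v then c else C' ⟨u, h⟩, ?_⟩⟩
    intro x y hxy
    split_ifs with hx hy hy
    · exact absurd hxy (by rw [hx, hy]; exact G.loopless.irrefl v)
    · exact fun heq => hc ⟨⟨y, hy⟩, (hx ▸ hxy : G.Adj v y), heq.symm⟩
    · exact fun heq => hc ⟨⟨x, hx⟩, (hy ▸ hxy.symm : G.Adj v x), heq⟩
    · exact C'.valid (show (G.comap (Subtype.val : V' → V)).Adj ⟨x, hx⟩ ⟨y, hy⟩ from hxy)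

lemma colorable_of_degenLE {V : Type} [Fintype V] (G : SimpleGraph V) (k : ℕ)
    (h : DegenLE G k) : G.Colorable (k + 1) :=
  colorable_of_degenLE_aux k (Fintype.card V) V inferInstance G le_rfl h

lemma wf_transGen {V : Type} [Fintype V] (D : V → V → Prop) (hacyc : DigraphAcyclic D) :
    WellFounded (Relation.TransGen D) := by
  haveI : IsTrans V (Relation.TransGen D) := ⟨fun _ _ _ => Relation.TransGen.trans⟩
  haveI : IsIrrefl V (Relation.TransGen D) := ⟨hacyc⟩
  exact Finite.wellFounded_of_trans_of_irrefl _

lemma wf_transGen_swap {V : Type} [Fintype V] (D : V → V → Prop) (hacyc : DigraphAcyclic D) :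
    WellFounded (Function.swap (Relation.TransGen D)) := by
  haveI : IsTrans V (Function.swap (Relation.TransGen D)) :=
    ⟨fun _ _ _ h1 h2 => Relation.TransGen.trans h2 h1⟩
  haveI : IsIrrefl V (Function.swap (Relation.TransGen D)) := ⟨hacyc⟩
  exact Finite.wellFounded_of_trans_of_irrefl _

lemma key_in_out {V : Type} [Fintype V] {a b : ℕ}
    (D : V → V → Prop) (hor : Oriented D)
    (hfree : ¬ ∃ f : completeBipartiteGraph (Fin a) (Fin b) →g LineGraph D,
      Function.Injective f) (v : V) :
    ({u | D u v} : Set V).ncard < a ∨ ({u | D v u} : Set V).ncard < b := by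
  classical
  by_contra hcon
  push_neg at hcon
  obtain ⟨hain, hbout⟩ := hcon
  have hIn : a ≤ Fintype.card ↥({u | D u v} : Set V) := by
    rwa [Set.ncard_eq_toFinset_card', Set.toFinset_card] at hain
  have hOut : b ≤ Fintype.card ↥({u | D v u} : Set V) := by
    rwa [Set.ncard_eq_toFinset_card', Set.toFinset_card] at hbout
  obtain ⟨ga⟩ := Function.Embedding.nonempty_of_card_le
    (α := Fin a) (β := ↥({u | D u v} : Set V)) (by simpa using hIn)
  obtain ⟨gb⟩ := Function.Embedding.nonempty_of_card_le
    (α := Fin b) (β := ↥({u | D v u} : Set V)) (by simpa using hOut)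
  have hgaD : ∀ i : Fin a, D ↑(ga i) v := fun i => (ga i).2
  have hgbD : ∀ j : Fin b, D v ↑(gb j) := fun j => (gb j).2
  refine hfree ⟨⟨fun x => Sum.elim
      (fun i => (⟨(↑(ga i), v), hgaD i⟩ : Arcs D))
      (fun j => (⟨(v, ↑(gb j)), hgbD j⟩ : Arcs D)) x, ?_⟩, ?_⟩
  · rintro (i | j) (i' | j') hadj
    · simp [completeBipartiteGraph] at hadj
    · refine ⟨?_, Or.inl rfl⟩
      intro heq
      have h1 : (↑(ga i) : V) = v := congrArg (fun e : Arcs D => e.1.1) heq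
      have h2 := hgaD i
      rw [h1] at h2
      exact hor.1 v h2
    · refine ⟨?_, Or.inr rfl⟩
      intro heq
      have h1 : v = (↑(ga i') : V) := congrArg (fun e : Arcs D => e.1.1) heq
      have h2 := hgaD i'
      rw [← h1] at h2
      exact hor.1 v h2
    · simp [completeBipartiteGraph] at hadj
  · rintro (i | j) (i' | j') heq
    · have h1 : (↑(ga i) : V) = ↑(ga i') := congrArg (fun e : Arcs D => e.1.1) heq
      exact congrArg Sum.inl (ga.injective (Subtype.ext h1))
    · exfalso
      have h1 : (↑(ga i) : V) = v := congrArg (fun e : Arcs D => e.1.1) heq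
      have h2 := hgaD i
      rw [h1] at h2
      exact hor.1 v h2
    · exfalso
      have h1 : v = (↑(ga i') : V) := congrArg (fun e : Arcs D => e.1.1) heq
      have h2 := hgaD i'
      rw [← h1] at h2
      exact hor.1 v h2
    · have h1 : (↑(gb j) : V) = ↑(gb j') := congrArg (fun e : Arcs D => e.1.2) heq
      exact congrArg Sum.inr (gb.injective (Subtype.ext h1))

end Aux

/-- Let `a, b ≥ 1` and let `D` be an acyclic oriented graph such that
`L(D)` contains no subgraph isomorphic to `K_{a,b}`. Then the underlying undirected
graph `G` of `D` satisfies `χ(G) ≤ a + b`; indeed `V(G)` can be partitioned into a set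
inducing a subgraph of degeneracy at most `b - 1` and a set inducing a subgraph of
degeneracy at most `a - 1`. -/
theorem stmt_11 {V : Type} [Fintype V] (a b : ℕ) (ha : 1 ≤ a) (hb : 1 ≤ b)
    (D : V → V → Prop) (hor : Oriented D) (hacyc : DigraphAcyclic D)
    (hfree : ¬ ∃ f : completeBipartiteGraph (Fin a) (Fin b) →g LineGraph D,
      Function.Injective f) :
    (UG D).Colorable (a + b) ∧
      ∃ A : Set V, DegenLE ((UG D).induce A) (b - 1) ∧
        DegenLE ((UG D).induce (Aᶜ : Set V)) (a - 1) :=  by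
  classical
  set A : Set V := {v | ({u | D v u} : Set V).ncard < b} with hA
  have hdegA : DegenLE ((UG D).induce A) (b - 1) := by
    intro s hs
    obtain ⟨m, hm, hmin⟩ := (wf_transGen D hacyc).has_min (Subtype.val '' s) (hs.image _)
    obtain ⟨v, hvs, rfl⟩ := hm
    refine ⟨v, hvs, ?_⟩
    have hsub : Subtype.val '' {u ∈ s | ((UG D).induce A).Adj v u} ⊆ {u | D (↑v) u} := by
      rintro x ⟨u, ⟨hus, hadj⟩, rfl⟩
      have hadj' : (UG D).Adj ↑v ↑u := hadj
      rw [UG, SimpleGraph.fromRel_adj] at hadj'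
      rcases hadj'.2 with hd | hd
      · exact hd
      · exact absurd (Relation.TransGen.single hd) (hmin ↑u ⟨u, hus, rfl⟩)
    have hvA : ({u | D (↑v) u} : Set V).ncard < b := v.2
    have h1 : ({u ∈ s | ((UG D).induce A).Adj v u}).ncard
        = (Subtype.val '' {u ∈ s | ((UG D).induce A).Adj v u}).ncard :=
      (Set.ncard_image_of_injective _ Subtype.val_injective).symm
    have h2 := Set.ncard_le_ncard hsub (Set.toFinite _)
    omega
  have hdegAc : DegenLE ((UG D).induce (Aᶜ : Set V)) (a - 1) := by
    intro s hs
    obtain ⟨m, hm, hmin⟩ := (wf_transGen_swap D hacyc).has_min (Subtype.val '' s) (hs.image _)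
    obtain ⟨v, hvs, rfl⟩ := hm
    refine ⟨v, hvs, ?_⟩
    have hsub : Subtype.val '' {u ∈ s | ((UG D).induce (Aᶜ : Set V)).Adj v u}
        ⊆ {u | D u ↑v} := by
      rintro x ⟨u, ⟨hus, hadj⟩, rfl⟩
      have hadj' : (UG D).Adj ↑v ↑u := hadj
      rw [UG, SimpleGraph.fromRel_adj] at hadj'
      rcases hadj'.2 with hd | hd
      · exact absurd (Relation.TransGen.single hd) (hmin ↑u ⟨u, hus, rfl⟩)
      · exact hd
    have hvA : ({u | D u (↑v)} : Set V).ncard < a := by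
      have hv2 : ¬ ({u | D (↑v : V) u} : Set V).ncard < b := v.2
      rcases key_in_out D hor hfree (↑v : V) with h | h
      · exact h
      · exact absurd h hv2
    have h1 : ({u ∈ s | ((UG D).induce (Aᶜ : Set V)).Adj v u}).ncard
        = (Subtype.val '' {u ∈ s | ((UG D).induce (Aᶜ : Set V)).Adj v u}).ncard :=
      (Set.ncard_image_of_injective _ Subtype.val_injective).symm
    have h2 := Set.ncard_le_ncard hsub (Set.toFinite _)
    omega
  have hcA : ((UG D).induce A).Colorable b := by
    have h := colorable_of_degenLE _ _ hdegA
    rwa [Nat.sub_add_cancel hb] at h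
  have hcAc : ((UG D).induce (Aᶜ : Set V)).Colorable a := by
    have h := colorable_of_degenLE _ _ hdegAc
    rwa [Nat.sub_add_cancel ha] at h
  obtain ⟨CA⟩ := hcA
  obtain ⟨CB⟩ := hcAc
  have hcol : (UG D).Colorable (b + a) := by
    have C0 : (UG D).Coloring (Fin b ⊕ Fin a) :=
      SimpleGraph.Coloring.mk
        (fun v => if h : v ∈ A then Sum.inl (CA ⟨v, h⟩) else Sum.inr (CB ⟨v, h⟩))
        (by
          intro x y hxy
          split_ifs with hx hy hy
          · intro heq
            exact CA.valid (show ((UG D).induce A).Adj ⟨x, hx⟩ ⟨y, hy⟩ from hxy)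
              (Sum.inl.inj heq)
          · exact fun heq => by simp at heq
          · exact fun heq => by simp at heq
          · intro heq
            exact CB.valid
              (show ((UG D).induce (Aᶜ : Set V)).Adj ⟨x, hx⟩ ⟨y, hy⟩ from hxy)
              (Sum.inr.inj heq))
    simpa using C0.colorable
  refine ⟨by rwa [Nat.add_comm] at hcol, A, hdegA, hdegAc⟩
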